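/- Let Q be a finite alphabet, μ a probability distribution on Q, and q* ∈ Q with μ(q*) > 0. Let D = μ^d be the product distribution on Q^d, and let D' be the distribution on Q^d obtained by first sampling x ~ μ^d, then choosing a uniformly random index i ∈ [d] and setting x_i = q*. Then the total variation distance between D and D' is at most sqrt((1 - μ(q*))/μ(q*)) · 1/sqrt(d). -/

import Mathlib

open Finset

/-- TV distance (paper convention, without the 1/2 factor) between the product
distribution `μ^d` and its planted version (a uniformly random coordinate set to `qs`)
is at most `sqrt((1-μ(qs))/μ(qs)) / sqrt d`. -/
theorem stmt_0 {Q : Type*} [Fintype Q] [DecidableEq Q] (d : ℕ) (hd : 0 < d)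
    (μ : Q → ℝ) (hμ : ∀ q, 0 ≤ μ q) (hsum : ∑ q, μ q = 1)
    (qs : Q) (hqs : 0 < μ qs) :
    ∑ x : Fin d → Q,
        |(∏ j, μ (x j)) -
          (1 / (d : ℝ)) * ∑ i : Fin d,
            (if x i = qs then ∏ j ∈ Finset.univ.erase i, μ (x j) else 0)| ≤
      Real.sqrt ((1 - μ qs) / μ qs) * (1 / Real.sqrt d) := by
  classical
  set p : ℝ := μ qs with hp
  have hp0 : 0 < p := hqs
  have hd0 : (0 : ℝ) < d := by exact_mod_cast hd
  have hp1 : p ≤ 1 := by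
    rw [← hsum]
    exact Finset.single_le_sum (fun q _ => hμ q) (mem_univ qs)
  set ι : Q → ℝ := fun q => if q = qs then 1 else 0 with hι
  set D : (Fin d → Q) → ℝ := fun x => ∏ j, μ (x j) with hD
  set K : (Fin d → Q) → ℝ := fun x => ∑ i, ι (x i) with hK
  have hDnn : ∀ x, 0 ≤ D x := fun x => Finset.prod_nonneg (fun j _ => hμ _)
  -- product-of-sums lemma
  have prodsum : ∀ g : Fin d → Q → ℝ,
      ∑ x : Fin d → Q, ∏ j, g j (x j) = ∏ j, ∑ q, g j q := by
    intro g
    rw [Finset.prod_univ_sum (fun _ => (univ : Finset Q)) g, Fintype.piFinset_univ]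
  have hιsum : ∑ q, μ q * ι q = p := by
    have : ∀ q, μ q * ι q = if q = qs then μ q else 0 := by
      intro q; simp only [hι]; split <;> simp
    rw [Finset.sum_congr rfl (fun q _ => this q), Finset.sum_ite_eq' univ qs μ]
    simp [hp]
  -- zeroth moment
  have sumD : ∑ x : Fin d → Q, D x = 1 := by
    have := prodsum (fun _ q => μ q)
    simpa [hD, hsum] using this
  -- first moment of each coordinate indicator
  have mom1 : ∀ i : Fin d, ∑ x : Fin d → Q, D x * ι (x i) = p := by
    intro i
    have h1 : ∀ x : Fin d → Q,
        D x * ι (x i) = ∏ j, (μ (x j) * if j = i then ι (x j) else 1) := by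
      intro x
      rw [Finset.prod_mul_distrib, Finset.prod_ite_eq' univ i (fun j => ι (x j))]
      simp [hD]
    rw [Finset.sum_congr rfl (fun x _ => h1 x),
      prodsum (fun j q => μ q * if j = i then ι q else 1)]
    have h2 : ∀ j : Fin d, (∑ q, μ q * if j = i then ι q else 1)
        = if j = i then p else 1 := by
      intro j
      split <;> simp [hιsum, hsum]
    rw [Finset.prod_congr rfl (fun j _ => h2 j), Finset.prod_ite_eq' univ i (fun _ => p)]
    simp
  -- second moment (pairs)
  have mom2 : ∀ i i' : Fin d, ∑ x : Fin d → Q, D x * (ι (x i) * ι (x i'))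
      = if i = i' then p else p ^ 2 := by
    intro i i'
    by_cases hii : i = i'
    · subst hii
      have hsq : ∀ q, ι q * ι q = ι q := by
        intro q; simp only [hι]; split <;> simp
      simpa [hsq] using mom1 i
    · rw [if_neg hii]
      have h1 : ∀ x : Fin d → Q,
          D x * (ι (x i) * ι (x i')) =
            ∏ j, (μ (x j) * ((if j = i then ι (x j) else 1) *
              (if j = i' then ι (x j) else 1))) := by
        intro x
        simp only [Finset.prod_mul_distrib]
        rw [Finset.prod_ite_eq' univ i (fun j => ι (x j)),
          Finset.prod_ite_eq' univ i' (fun j => ι (x j))]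
        simp [hD]
      rw [Finset.sum_congr rfl (fun x _ => h1 x),
        prodsum (fun j q => μ q * ((if j = i then ι q else 1) * (if j = i' then ι q else 1)))]
      have h2 : ∀ j : Fin d, (∑ q, μ q * ((if j = i then ι q else 1) *
          (if j = i' then ι q else 1))) = (if j = i then p else 1) * (if j = i' then p else 1) := by
        intro j
        by_cases hji : j = i
        · simp [hji, hii, hιsum]
        · by_cases hji' : j = i'
          · have hne : ¬ (i' = i) := fun h => hii h.symm
            simp [hji', hne, hιsum]
          · simp [hji, hji', hsum]
      rw [Finset.prod_congr rfl (fun j _ => h2 j), Finset.prod_mul_distrib,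
        Finset.prod_ite_eq' univ i (fun _ => p), Finset.prod_ite_eq' univ i' (fun _ => p)]
      simp [sq]
  -- first moment of K
  have sumDK : ∑ x : Fin d → Q, D x * K x = d * p := by
    have : ∀ x : Fin d → Q, D x * K x = ∑ i, D x * ι (x i) := by
      intro x; rw [hK, Finset.mul_sum]
    rw [Finset.sum_congr rfl (fun x _ => this x), Finset.sum_comm]
    rw [Finset.sum_congr rfl (fun i _ => mom1 i)]
    simp [mul_comm]
  -- second moment of K
  have sumDK2 : ∑ x : Fin d → Q, D x * K x ^ 2 = d * p + (d * (d - 1)) * p ^ 2 := by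
    have h1 : ∀ x : Fin d → Q, D x * K x ^ 2 = ∑ i, ∑ i', D x * (ι (x i) * ι (x i')) := by
      intro x
      rw [hK, sq, Finset.sum_mul_sum]
      rw [Finset.mul_sum]
      exact Finset.sum_congr rfl (fun i _ => by rw [Finset.mul_sum])
    rw [Finset.sum_congr rfl (fun x _ => h1 x), Finset.sum_comm]
    have h2 : ∀ i : Fin d, (∑ i' : Fin d, ∑ x : Fin d → Q, D x * (ι (x i) * ι (x i')))
        = p + (d - 1) * p ^ 2 := by
      intro i
      have : ∀ i' : Fin d, (∑ x : Fin d → Q, D x * (ι (x i) * ι (x i')))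
          = p ^ 2 + if i' = i then p - p ^ 2 else 0 := by
        intro i'
        rw [mom2 i i']
        by_cases h : i = i'
        · subst h; simp
        · rw [if_neg h, if_neg (Ne.symm h)]; ring
      rw [Finset.sum_congr rfl (fun i' _ => this i'), Finset.sum_add_distrib,
        Finset.sum_ite_eq' univ i (fun _ => p - p ^ 2)]
      simp
      ring
    have h3 : ∀ i : Fin d, (∑ x : Fin d → Q, ∑ i' : Fin d, D x * (ι (x i) * ι (x i')))
        = p + (d - 1) * p ^ 2 := by
      intro i
      rw [Finset.sum_comm]
      exact h2 i
    rw [Finset.sum_congr rfl (fun i _ => h3 i)]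
    simp
    ring
  -- the variance computation
  have hdp : (d : ℝ) * p ≠ 0 := by positivity
  set c : (Fin d → Q) → ℝ := fun x => 1 - K x / (d * p) with hc
  have var : ∑ x : Fin d → Q, D x * c x ^ 2 = (1 - p) / (d * p) := by
    have h1 : ∀ x : Fin d → Q, D x * c x ^ 2 =
        D x - (2 / (d * p)) * (D x * K x) + (1 / (d * p) ^ 2) * (D x * K x ^ 2) := by
      intro x
      simp only [hc]
      field_simp
      ring
    rw [Finset.sum_congr rfl (fun x _ => h1 x), Finset.sum_add_distrib, Finset.sum_sub_distrib,
      ← Finset.mul_sum, ← Finset.mul_sum, sumD, sumDK, sumDK2]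
    field_simp
    ring
  -- pointwise rewrite of the summand
  have point : ∀ x : Fin d → Q,
      |(∏ j, μ (x j)) - (1 / (d : ℝ)) * ∑ i : Fin d,
          (if x i = qs then ∏ j ∈ Finset.univ.erase i, μ (x j) else 0)|
        = Real.sqrt (D x) * (Real.sqrt (D x) * |c x|) := by
    intro x
    have hterm : ∀ i : Fin d,
        (if x i = qs then ∏ j ∈ Finset.univ.erase i, μ (x j) else 0)
          = ι (x i) * (D x / p) := by
      intro i
      by_cases h : x i = qs
      · rw [if_pos h]
        have hmul : μ (x i) * ∏ j ∈ Finset.univ.erase i, μ (x j) = ∏ j, μ (x j) :=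
          Finset.mul_prod_erase univ (fun j => μ (x j)) (mem_univ i)
        rw [h] at hmul
        have : (∏ j ∈ Finset.univ.erase i, μ (x j)) = D x / p := by
          rw [eq_div_iff (ne_of_gt hp0), mul_comm]
          exact hmul
        rw [this]
        simp [hι, h]
      · rw [if_neg h]
        simp [hι, h]
    have hK' : (∑ i : Fin d, (if x i = qs then ∏ j ∈ Finset.univ.erase i, μ (x j) else 0))
        = K x * (D x / p) := by
      rw [Finset.sum_congr rfl (fun i _ => hterm i), ← Finset.sum_mul, hK]
    rw [hK']
    have h2 : (∏ j, μ (x j)) - (1 / (d : ℝ)) * (K x * (D x / p)) = D x * c x := by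
      have : (∏ j, μ (x j)) = D x := rfl
      rw [this, hc]
      field_simp
    rw [h2, abs_mul, abs_of_nonneg (hDnn x), ← mul_assoc, Real.mul_self_sqrt (hDnn x)]
  rw [Finset.sum_congr rfl (fun x _ => point x)]
  -- Cauchy–Schwarz
  have csq := Finset.sum_mul_sq_le_sq_mul_sq univ (fun x : Fin d → Q => Real.sqrt (D x))
      (fun x => Real.sqrt (D x) * |c x|)
  have hA : ∑ x : Fin d → Q, Real.sqrt (D x) ^ 2 = 1 := by
    rw [Finset.sum_congr rfl (fun x _ => Real.sq_sqrt (hDnn x))]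
    exact sumD
  have hB : ∑ x : Fin d → Q, (Real.sqrt (D x) * |c x|) ^ 2 = (1 - p) / (d * p) := by
    have : ∀ x : Fin d → Q, (Real.sqrt (D x) * |c x|) ^ 2 = D x * c x ^ 2 := by
      intro x
      rw [mul_pow, Real.sq_sqrt (hDnn x), sq_abs]
    rw [Finset.sum_congr rfl (fun x _ => this x)]
    exact var
  rw [hA, hB, one_mul] at csq
  have hnn : 0 ≤ ∑ x : Fin d → Q, Real.sqrt (D x) * (Real.sqrt (D x) * |c x|) := by
    apply Finset.sum_nonneg
    intro x _
    positivity
  have hle : ∑ x : Fin d → Q, Real.sqrt (D x) * (Real.sqrt (D x) * |c x|)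
      ≤ Real.sqrt ((1 - p) / (d * p)) := by
    have := Real.sqrt_le_sqrt (csq.trans (le_refl _))
    calc ∑ x : Fin d → Q, Real.sqrt (D x) * (Real.sqrt (D x) * |c x|)
        = Real.sqrt ((∑ x : Fin d → Q, Real.sqrt (D x) * (Real.sqrt (D x) * |c x|)) ^ 2) := by
          rw [Real.sqrt_sq hnn]
      _ ≤ Real.sqrt ((1 - p) / (d * p)) := Real.sqrt_le_sqrt csq
  refine hle.trans (le_of_eq ?_)
  have h1 : (1 - p) / ((d : ℝ) * p) = ((1 - p) / p) / d := by
    rw [div_div, mul_comm]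
  have h2 : (0 : ℝ) ≤ (1 - p) / p := div_nonneg (by linarith) hp0.le
  rw [h1, Real.sqrt_div h2, div_eq_mul_one_div]
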